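/- arXiv:1809.09588 — 3 statements merged into one kernel-verified Lean document; each statement's English description precedes it below -/
import Mathlib

section
/- Let (Ω, F, P) be a probability space, F = F_T, and let (τ_n) be stopping times with τ_n ↗ ∞ P-a.s. Let Qⁿ be probability measures on F with Qⁿ = Q^m on F_{τ_n} ∩ F for n ≤ m, and let Q be a finitely additive set function on F with Q = Qⁿ on F_{τ_n} for each n, Q(Ω) = 1, and Q(A) = 0 whenever P(A) = 0. Then Q is countably additive if and only if limsup_{n→∞} Qⁿ(τ_n > T) = 1. -/
open MeasureTheory Filter Set
open scoped ENNReal NNReal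

/-- A finitely additive candidate WELMM `Q` agreeing with probability measures `Qⁿ` on the
stopping-time σ-fields `F_{τ_n}` is countably additive (equivalently: continuous at `∅`)
if and only if `limsup_n Qⁿ(τ_n > T) = 1`. -/
theorem stmt2 {Ω : Type*} {m : MeasurableSpace Ω}
    (P : Measure Ω) [IsProbabilityMeasure P]
    (ℱ : Filtration ℝ≥0∞ m) (T : ℝ≥0∞) (hT : T ≠ ⊤)
    -- `F = F_T`
    (hFT : ∀ s : Set Ω, MeasurableSet s → MeasurableSet[ℱ T] s)
    (τ : ℕ → Ω → ℝ≥0∞) (hτ : ∀ n, IsStoppingTime ℱ (fun ω => ((τ n ω : ℝ≥0∞) : WithTop ℝ≥0∞)))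
    -- `τ_n ↗ ∞` P-a.s.
    (hτ_mono : ∀ᵐ ω ∂P, Monotone fun n => τ n ω)
    (hτ_lim : ∀ᵐ ω ∂P, Tendsto (fun n => τ n ω) atTop (nhds ⊤))
    (Qn : ℕ → Measure Ω) (hQn : ∀ n, IsProbabilityMeasure (Qn n))
    -- consistency: `Qⁿ = Q^m` on `F_{τ_n}` for `n ≤ m`
    (hcons : ∀ n k, n ≤ k → ∀ A : Set Ω,
      MeasurableSet[(hτ n).measurableSpace] A → Qn n A = Qn k A)
    (Q : Set Ω → ℝ)
    -- finite additivity, positivity, normalization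
    (hadd : ∀ A B : Set Ω, MeasurableSet A → MeasurableSet B → Disjoint A B →
      Q (A ∪ B) = Q A + Q B)
    (hpos : ∀ A : Set Ω, MeasurableSet A → 0 ≤ Q A)
    (hone : Q Set.univ = 1)
    -- `Q = Qⁿ` on `F_{τ_n}`
    (hagree : ∀ n, ∀ A : Set Ω, MeasurableSet[(hτ n).measurableSpace] A →
      Q A = (Qn n A).toReal)
    -- `Q(A) = 0` whenever `P(A) = 0`
    (hac : ∀ A : Set Ω, MeasurableSet A → P A = 0 → Q A = 0) :
    -- countable additivity ⟺ continuity at ∅ ⟺ limsup_n Qⁿ(τ_n > T) = 1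
    (∀ E : ℕ → Set Ω, (∀ k, MeasurableSet (E k)) → Antitone E → (⋂ k, E k) = ∅ →
        Tendsto (fun k => Q (E k)) atTop (nhds 0)) ↔
      Filter.limsup (fun n => (Qn n {ω | T < τ n ω}).toReal) atTop = 1 := by
  classical
  have hτle : ∀ n (t : ℝ≥0∞), MeasurableSet[ℱ t] {ω | τ n ω ≤ t} := fun n t => by
    simpa only [WithTop.coe_le_coe] using hτ n t
  -- the sets `A n = {τ n ≤ T}` and `D n = ⋂_{k ≤ n} A k`
  set A : ℕ → Set Ω := fun n => {ω | τ n ω ≤ T} with hA_def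
  have hAmeas : ∀ n, MeasurableSet (A n) := fun n => ℱ.le T _ (hτle n T)
  set D : ℕ → Set Ω := fun n => ⋂ k, ⋂ (_ : k ≤ n), A k with hD_def
  have hDmeas : ∀ n, MeasurableSet (D n) :=
    fun n => MeasurableSet.iInter fun k => MeasurableSet.iInter fun _ => hAmeas k
  have hDsub : ∀ n, D n ⊆ A n := by
    intro n ω hω
    simp only [hD_def, mem_iInter] at hω
    exact hω n le_rfl
  have hDanti : Antitone D := by
    intro n n' hnn' ω hω
    simp only [hD_def, mem_iInter] at hω ⊢
    exact fun k hk => hω k (hk.trans hnn')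
  -- basic properties of Q
  have Qmono : ∀ {s t : Set Ω}, MeasurableSet s → MeasurableSet t → s ⊆ t → Q s ≤ Q t := by
    intro s t hs ht hst
    have hd : Disjoint s (t \ s) := disjoint_sdiff_self_right
    have h1 := hadd s (t \ s) hs (ht.diff hs) hd
    rw [Set.union_diff_cancel hst] at h1
    have := hpos (t \ s) (ht.diff hs)
    linarith
  have Qle_one : ∀ {s : Set Ω}, MeasurableSet s → Q s ≤ 1 := by
    intro s hs
    rw [← hone]
    exact Qmono hs MeasurableSet.univ (subset_univ s)
  have Qsplit : ∀ {s t : Set Ω}, MeasurableSet s → MeasurableSet t → s ⊆ t →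
      Q t = Q s + Q (t \ s) := by
    intro s t hs ht hst
    have h1 := hadd s (t \ s) hs (ht.diff hs) disjoint_sdiff_self_right
    rw [Set.union_diff_cancel hst] at h1
    exact h1
  have Qnull_diff : ∀ {s t : Set Ω}, MeasurableSet s → MeasurableSet t → s ⊆ t →
      P (t \ s) = 0 → Q t = Q s := by
    intro s t hs ht hst hnull
    rw [Qsplit hs ht hst, hac _ (ht.diff hs) hnull, add_zero]
  -- A n \ D n is P-null
  have hADnull : ∀ n, P (A n \ D n) = 0 := by
    intro n
    refine measure_mono_null ?_ (ae_iff.mp hτ_mono)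
    intro ω hω
    simp only [mem_diff, hD_def, mem_iInter, not_forall, hA_def, mem_setOf_eq] at hω
    obtain ⟨h1, k, hk, h2⟩ := hω
    simp only [mem_setOf_eq]
    intro hmono
    exact h2 ((hmono hk).trans h1)
  have hQAD : ∀ n, Q (A n) = Q (D n) :=
    fun n => Qnull_diff (hDmeas n) (hAmeas n) (hDsub n) (hADnull n)
  -- ⋂ n, A n is P-null
  have hAe : ∀ᵐ ω ∂P, ∃ n, T < τ n ω := by
    filter_upwards [hτ_lim] with ω hω
    exact (hω.eventually (Ioi_mem_nhds hT.lt_top)).exists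
  have hInull : P (⋂ n, A n) = 0 := by
    refine measure_mono_null ?_ (ae_iff.mp hAe)
    intro ω hω
    simp only [mem_iInter, hA_def, mem_setOf_eq] at hω
    simp only [mem_setOf_eq, not_exists, not_lt]
    exact hω
  have hDA_inter : (⋂ n, D n) = ⋂ n, A n := by
    apply Subset.antisymm
    · exact iInter_mono fun n => hDsub n
    · intro ω hω
      simp only [mem_iInter, hA_def, mem_setOf_eq] at hω
      simp only [hD_def, mem_iInter]
      exact fun n k _ => hω k
  have hImeas : MeasurableSet (⋂ n, D n) := MeasurableSet.iInter hDmeas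
  have hQI : Q (⋂ n, D n) = 0 := by
    apply hac _ hImeas
    rw [hDA_inter]; exact hInull
  -- key: for measurable B, B ∩ {T < τ n} ∈ F_{τ n}
  have hkey : ∀ n (B : Set Ω), MeasurableSet B →
      MeasurableSet[(hτ n).measurableSpace] (B ∩ {ω | T < τ n ω}) := by
    intro n B hB
    rw [IsStoppingTime.measurableSet]
    refine ⟨le_iSup (fun t => ℱ t) T _ ((hFT B hB).inter ?_), ?_⟩
    · have hc : {ω | T < τ n ω} = {ω | τ n ω ≤ T}ᶜ := by ext; simp
      rw [hc]; exact (hτle n T).compl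
    intro t
    simp only [WithTop.coe_le_coe]
    by_cases ht : t ≤ T
    · convert @MeasurableSet.empty _ (ℱ t)
      ext ω
      simp only [mem_inter_iff, mem_setOf_eq, mem_empty_iff_false, iff_false, not_and]
      rintro ⟨-, h1⟩ h2
      exact absurd (h2.trans ht) h1.not_ge
    · push_neg at ht
      have heq : B ∩ {ω | T < τ n ω} ∩ {ω | τ n ω ≤ t}
          = B ∩ ({ω | τ n ω ≤ t} \ {ω | τ n ω ≤ T}) := by
        ext ω
        simp only [mem_inter_iff, mem_setOf_eq, mem_diff, not_le]
        tauto
      rw [heq]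
      exact (ℱ.mono ht.le _ (hFT B hB)).inter
        ((hτle n t).diff (ℱ.mono ht.le _ (hτle n T)))
  have hgt_mem : ∀ n, MeasurableSet[(hτ n).measurableSpace] {ω | T < τ n ω} := by
    intro n
    have := hkey n univ MeasurableSet.univ
    rwa [univ_inter] at this
  -- Q {T < τ n} = 1 - Q (D n)
  have hcomplA : ∀ n, {ω | T < τ n ω} = (A n)ᶜ := by
    intro n; ext ω; simp [hA_def, not_le]
  have hQgt : ∀ n, (Qn n {ω | T < τ n ω}).toReal = 1 - Q (D n) := by
    intro n
    rw [← hagree n _ (hgt_mem n), hcomplA n]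
    have h1 := hadd (A n) (A n)ᶜ (hAmeas n) (hAmeas n).compl disjoint_compl_right
    rw [union_compl_self, hone] at h1
    rw [← hQAD n]
    linarith
  constructor
  · -- continuity at ∅ ⇒ limsup = 1
    intro hcont
    have h1 : Tendsto (fun n => Q (D n \ ⋂ k, D k)) atTop (nhds 0) := by
      apply hcont
      · exact fun k => (hDmeas k).diff hImeas
      · exact fun n n' h => diff_subset_diff_left (hDanti h)
      · simp only [diff_eq]
        rw [← iInter_inter, inter_compl_self]
    have h2 : Tendsto (fun n => Q (D n)) atTop (nhds 0) := by
      have heq : ∀ n, Q (D n) = Q (D n \ ⋂ k, D k) := by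
        intro n
        rw [Qsplit hImeas (hDmeas n) (iInter_subset D n), hQI, zero_add]
      simpa only [← heq] using h1
    have h3 : Tendsto (fun n => (Qn n {ω | T < τ n ω}).toReal) atTop (nhds 1) := by
      simp only [hQgt]
      have := h2.const_sub 1
      simpa using this
    exact h3.limsup_eq
  · -- limsup = 1 ⇒ continuity at ∅
    intro hls
    -- Q (D n) decreases to its infimum L, and 1 - L = limsup = 1, so L = 0
    have hQDanti : Antitone fun n => Q (D n) :=
      fun n n' h => Qmono (hDmeas n') (hDmeas n) (hDanti h)
    have hbdd : BddBelow (range fun n => Q (D n)) := by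
      refine ⟨0, ?_⟩
      rintro x ⟨n, rfl⟩
      exact hpos _ (hDmeas n)
    have htendL : Tendsto (fun n => Q (D n)) atTop (nhds (⨅ n, Q (D n))) :=
      tendsto_atTop_ciInf hQDanti hbdd
    have htend1 : Tendsto (fun n => (Qn n {ω | T < τ n ω}).toReal) atTop
        (nhds (1 - ⨅ n, Q (D n))) := by
      simp only [hQgt]
      have := htendL.const_sub 1
      simpa using this
    have hL0 : (⨅ n, Q (D n)) = 0 := by
      have := htend1.limsup_eq
      rw [hls] at this
      linarith
    rw [hL0] at htendL
    -- now the continuity statement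
    intro E hEmeas hEanti hEinter
    rw [NormedAddCommGroup.tendsto_nhds_zero]
    intro ε hε
    -- pick n with Q (D n) < ε / 2
    have hev : ∀ᶠ n in atTop, Q (D n) < ε / 2 :=
      htendL.eventually (Filter.Tendsto.eventually_lt_const (by linarith) tendsto_id)
    obtain ⟨n, hn⟩ := hev.exists
    haveI := hQn n
    -- Qn n (E k) → 0
    have htendE : Tendsto (fun k => Qn n (E k)) atTop (nhds 0) := by
      have := tendsto_measure_iInter_atTop (μ := Qn n)
        (fun k => (hEmeas k).nullMeasurableSet) hEanti ⟨0, measure_ne_top _ _⟩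
      rw [hEinter] at this
      simpa [Function.comp_def] using this
    have hev2 : ∀ᶠ k in atTop, Qn n (E k) < ENNReal.ofReal (ε / 2) :=
      htendE.eventually_lt_const (ENNReal.ofReal_pos.mpr (by linarith))
    filter_upwards [hev2] with k hk
    have hEk := hEmeas k
    -- split E k
    have hsplit : E k = (E k ∩ {ω | T < τ n ω}) ∪ (E k ∩ A n) := by
      rw [hcomplA n, ← inter_union_distrib_left, compl_union_self, inter_univ]
    have hdisj : Disjoint (E k ∩ {ω | T < τ n ω}) (E k ∩ A n) := by
      rw [hcomplA n]
      exact Disjoint.mono inter_subset_right inter_subset_right disjoint_compl_left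
    have hm1 : MeasurableSet (E k ∩ {ω | T < τ n ω}) := by
      rw [hcomplA n]; exact hEk.inter (hAmeas n).compl
    have hm2 : MeasurableSet (E k ∩ A n) := hEk.inter (hAmeas n)
    have hQEk : Q (E k) = Q (E k ∩ {ω | T < τ n ω}) + Q (E k ∩ A n) := by
      conv_lhs => rw [hsplit]
      exact hadd _ _ hm1 hm2 hdisj
    have hb1 : Q (E k ∩ {ω | T < τ n ω}) < ε / 2 := by
      rw [hagree n _ (hkey n (E k) hEk)]
      have hle : Qn n (E k ∩ {ω | T < τ n ω}) ≤ Qn n (E k) := measure_mono inter_subset_left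
      have : Qn n (E k ∩ {ω | T < τ n ω}) < ENNReal.ofReal (ε / 2) := lt_of_le_of_lt hle hk
      exact (ENNReal.lt_ofReal_iff_toReal_lt (measure_ne_top _ _)).mp this
    have hb2 : Q (E k ∩ A n) < ε / 2 := by
      calc Q (E k ∩ A n) ≤ Q (A n) := Qmono hm2 (hAmeas n) inter_subset_right
        _ = Q (D n) := hQAD n
        _ < ε / 2 := hn
    have hQEk_pos : 0 ≤ Q (E k) := hpos _ hEk
    rw [Real.norm_eq_abs, abs_of_nonneg hQEk_pos, hQEk]
    linarith
end

section
/- Let (Ω, F, P) be a probability space with F = F_T, let (τ_n) be stopping times with τ_n ↗ ∞ P-a.s., and let Q be a finitely additive set function on F with Q(Ω) = 1 that agrees on each F_{τ_n} with a probability measure Qⁿ equivalent to P on F_{τ_n}. If A ∈ F satisfies Q(A) = 0, then P(A) = 0. -/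
open MeasureTheory Filter Set
open scoped ENNReal NNReal

/-- A finitely additive weakly equivalent local martingale measure `Q`, agreeing on each
`F_{τ_n}` with a probability measure `Qⁿ` equivalent to `P` on `F_{τ_n}`, has the same
null sets as `P`: if `Q(A) = 0` for `A ∈ F = F_T`, then `P(A) = 0`. -/
theorem stmt3 {Ω : Type*} {m : MeasurableSpace Ω}
    (P : Measure Ω) [IsProbabilityMeasure P]
    (ℱ : Filtration ℝ≥0∞ m) (T : ℝ≥0∞) (hT : T ≠ ⊤)
    -- `F = F_T`
    (hFT : ∀ s : Set Ω, MeasurableSet s → MeasurableSet[ℱ T] s)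
    (τ : ℕ → Ω → ℝ≥0∞) (hτ : ∀ n, IsStoppingTime ℱ (fun ω => (τ n ω : WithTop ℝ≥0∞)))
    -- `τ_n ↗ ∞` P-a.s.
    (hτ_mono : ∀ᵐ ω ∂P, Monotone fun n => τ n ω)
    (hτ_lim : ∀ᵐ ω ∂P, Tendsto (fun n => τ n ω) atTop (nhds ⊤))
    (Qn : ℕ → Measure Ω) (hQn : ∀ n, IsProbabilityMeasure (Qn n))
    -- each `Qⁿ` is equivalent to `P` on `F_{τ_n}`
    (hequiv : ∀ n, ∀ A : Set Ω, MeasurableSet[(hτ n).measurableSpace] A →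
      (Qn n A = 0 ↔ P A = 0))
    (Q : Set Ω → ℝ)
    -- finite additivity and normalization
    (hadd : ∀ A B : Set Ω, MeasurableSet A → MeasurableSet B → Disjoint A B →
      Q (A ∪ B) = Q A + Q B)
    (hpos : ∀ A : Set Ω, MeasurableSet A → 0 ≤ Q A)
    (hone : Q Set.univ = 1)
    -- `Q = Qⁿ` on `F_{τ_n}`
    (hagree : ∀ n, ∀ A : Set Ω, MeasurableSet[(hτ n).measurableSpace] A →
      Q A = (Qn n A).toReal)
    (A : Set Ω) (hA : MeasurableSet A) (hQA : Q A = 0) :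
    P A = 0 := by
  -- the sets A ∩ {τ_n > T}
  set S : ℕ → Set Ω := fun n => A ∩ {ω | T < τ n ω} with hS
  have hτ' : ∀ n t, MeasurableSet[ℱ t] {ω | τ n ω ≤ t} := fun n t => by
    simpa only [WithTop.coe_le_coe] using hτ n t
  -- measurability of {T < τ n} in m
  have hgtm : ∀ n, MeasurableSet {ω | T < τ n ω} := by
    intro n
    have : {ω | T < τ n ω} = {ω | τ n ω ≤ T}ᶜ := by
      ext ω; simp [not_le]
    rw [this]
    exact (ℱ.le T _ (hτ' n T)).compl
  have hSm : ∀ n, MeasurableSet (S n) := fun n => hA.inter (hgtm n)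
  -- S n is F_{τ_n}-measurable
  have hSτ : ∀ n, MeasurableSet[(hτ n).measurableSpace] (S n) := by
    intro n
    rw [(hτ n).measurableSet]
    refine ⟨(le_iSup (fun t => ℱ t) T) _ (hFT _ (hSm n)), ?_⟩
    intro t
    simp only [WithTop.coe_le_coe]
    rcases le_or_gt t T with ht | ht
    · have : S n ∩ {ω | τ n ω ≤ t} = ∅ := by
        ext ω
        simp only [hS, mem_inter_iff, mem_setOf_eq, mem_empty_iff_false, iff_false]
        rintro ⟨⟨-, h1⟩, h2⟩
        exact absurd (h2.trans ht) (not_le.2 h1)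
      rw [this]; exact @MeasurableSet.empty _ (ℱ t)
    · refine MeasurableSet.inter (MeasurableSet.inter ?_ ?_) (hτ' n t)
      · exact ℱ.mono ht.le _ (hFT A hA)
      · have : {ω | T < τ n ω} = {ω | τ n ω ≤ T}ᶜ := by ext ω; simp [not_le]
        rw [this]
        exact (ℱ.mono ht.le _ (hτ' n T)).compl
  -- Q (S n) = 0
  have hQS : ∀ n, Q (S n) = 0 := by
    intro n
    have hsplit : Q A = Q (S n) + Q (A \ S n) := by
      have := hadd (S n) (A \ S n) (hSm n) (hA.diff (hSm n)) disjoint_sdiff_right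
      rwa [union_diff_cancel (inter_subset_left)] at this
    have h1 := hpos (S n) (hSm n)
    have h2 := hpos (A \ S n) (hA.diff (hSm n))
    linarith [hsplit, hQA.symm]
  -- P (S n) = 0
  have hPS : ∀ n, P (S n) = 0 := by
    intro n
    have := hagree n (S n) (hSτ n)
    rw [hQS n] at this
    have hQn0 : Qn n (S n) = 0 := by
      have hfin : Qn n (S n) ≠ ⊤ := measure_ne_top (Qn n) _
      exact (ENNReal.toReal_eq_zero_iff _).1 this.symm |>.resolve_right hfin
    exact (hequiv n (S n) (hSτ n)).1 hQn0
  -- A is a.e. contained in ⋃ S n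
  have hae : ∀ᵐ ω ∂P, ω ∈ A → ω ∈ ⋃ n, S n := by
    filter_upwards [hτ_lim] with ω hω hωA
    have := hω.eventually_const_lt (hT.lt_top)
    obtain ⟨n, hn⟩ := this.exists
    exact mem_iUnion.2 ⟨n, hωA, hn⟩
  have : P A ≤ P (⋃ n, S n) := measure_mono_ae hae
  rw [measure_iUnion_null hPS] at this
  exact le_antisymm this (by positivity)
end

section
/- Let ξ be a continuous-time irreducible Markov chain on a countable state space J = {1,…,N}, defined on [0,T], with only finitely many jumps on [0,T] almost surely, and let S be a continuous semimartingale with local time L^S. Let c, σ : I × J → ℝ be Borel with σ never zero and (c(·,j)/σ(·,j))² locally integrable on the open interval I for each j, and suppose S takes values in I. Then almost surely ∫₀^T c²(S_s, ξ_s) ds < ∞. -/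
open MeasureTheory Filter Set
open scoped ENNReal NNReal

/-- Lemma 2.5 of the paper: if `S` is a continuous semimartingale with values in the open
interval `I = (l, r)` whose quadratic variation has the occupation density `L` (occupation
times formula with `d[S,S]_s = σ²(S_s, ξ_s) ds`), the regime process `ξ` visits only
finitely many states on `[0,T]` a.s., and `(c(·,j)/σ(·,j))²` is locally integrable on `I`
for every regime `j`, then almost surely `∫₀^T c²(S_s, ξ_s) ds < ∞`. -/
theorem stmt9 {Ω J : Type*} {m : MeasurableSpace Ω} [Countable J]
    (P : Measure Ω) [IsProbabilityMeasure P]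
    (l r T : ℝ) (hlr : l < r) (hT : 0 ≤ T)
    (S : ℝ → Ω → ℝ) (ξ : ℝ → Ω → J)
    (c σ : ℝ → J → ℝ)
    (hσ : ∀ x ∈ Set.Ioo l r, ∀ j : J, σ x j ≠ 0)
    (hloc : ∀ j : J, ∀ K : Set ℝ, IsCompact K → K ⊆ Set.Ioo l r →
      IntegrableOn (fun x => (c x j / σ x j) ^ 2) K volume)
    (hSval : ∀ᵐ ω ∂P, ∀ t ∈ Set.Icc 0 T, S t ω ∈ Set.Ioo l r)
    (hScont : ∀ᵐ ω ∂P, ContinuousOn (fun t => S t ω) (Set.Icc 0 T))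
    (hξfin : ∀ᵐ ω ∂P, Set.Finite ((fun s => ξ s ω) '' Set.Icc 0 T))
    -- local time of `S` on `[0,T]`: bounded and satisfying the occupation times formula
    (L : ℝ → Ω → ℝ≥0∞)
    (hLbd : ∀ᵐ ω ∂P, ∃ C : ℝ≥0∞, C ≠ ⊤ ∧ ∀ x, L x ω ≤ C)
    (hocc : ∀ᵐ ω ∂P, ∀ g : ℝ → ℝ≥0∞, Measurable g →
      ∫⁻ s in Set.Icc 0 T, g (S s ω) * ENNReal.ofReal ((σ (S s ω) (ξ s ω)) ^ 2) ∂volume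
        = ∫⁻ x, g x * (2 * L x ω) ∂volume) :
    ∀ᵐ ω ∂P, ∫⁻ s in Set.Icc 0 T, ENNReal.ofReal ((c (S s ω) (ξ s ω)) ^ 2) ∂volume < ⊤ := by
  filter_upwards [hSval, hScont, hξfin, hLbd, hocc] with ω hval hcont hfin hbd hocc'
  obtain ⟨C, hCne, hCle⟩ := hbd
  -- the range of `S` on `[0,T]` is a compact subset of `(l, r)`
  set K : Set ℝ := (fun t => S t ω) '' Set.Icc 0 T with hKdef
  have hKcpt : IsCompact K := isCompact_Icc.image_of_continuousOn hcont
  have hKsub : K ⊆ Set.Ioo l r := by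
    rintro x ⟨t, ht, rfl⟩; exact hval t ht
  have hKm : MeasurableSet K := hKcpt.measurableSet
  -- for each regime, a measurable majorant of `(c/σ)²` on `K` with finite integral
  have key : ∀ j : J, ∃ g : ℝ → ℝ≥0∞, Measurable g ∧
      (∀ x ∈ K, ENNReal.ofReal ((c x j / σ x j) ^ 2) ≤ g x) ∧
      ∫⁻ x, g x ∂volume < ⊤ := by
    intro j
    have hint := hloc j K hKcpt hKsub
    have asm : AEStronglyMeasurable (fun x => (c x j / σ x j) ^ 2) (volume.restrict K) :=
      hint.aestronglyMeasurable
    set φ : ℝ → ℝ := asm.mk _ with hφdef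
    have hφm : Measurable φ := asm.stronglyMeasurable_mk.measurable
    have hφae : (fun x => (c x j / σ x j) ^ 2) =ᵐ[volume.restrict K] φ := asm.ae_eq_mk
    set D : Set ℝ := {x | (c x j / σ x j) ^ 2 ≠ φ x} with hDdef
    have hD0 : volume.restrict K D = 0 := hφae
    set M : Set ℝ := toMeasurable (volume.restrict K) D with hMdef
    have hMm : MeasurableSet M := measurableSet_toMeasurable _ _
    have hM0 : volume.restrict K M = 0 := by
      rw [hMdef, measure_toMeasurable]; exact hD0
    have hDM : D ⊆ M := subset_toMeasurable _ _
    refine ⟨K.indicator (fun x => ENNReal.ofReal (φ x) +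
        M.indicator (fun _ => (⊤ : ℝ≥0∞)) x), ?_, ?_, ?_⟩
    · exact ((ENNReal.measurable_ofReal.comp hφm).add
        (measurable_const.indicator hMm)).indicator hKm
    · intro x hx
      rw [Set.indicator_of_mem hx]
      by_cases hxD : (c x j / σ x j) ^ 2 = φ x
      · rw [hxD]; exact le_self_add
      · have : x ∈ M := hDM hxD
        simp [Set.indicator_of_mem this]
    · rw [lintegral_indicator hKm _,
        lintegral_add_left hφm.ennreal_ofReal,
        lintegral_indicator hMm _, Measure.restrict_restrict hMm,
        setLIntegral_const]
      have h1 : ∫⁻ x in K, ENNReal.ofReal (φ x) ∂volume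
          = ∫⁻ x in K, ENNReal.ofReal ((c x j / σ x j) ^ 2) ∂volume :=
        lintegral_congr_ae (hφae.fun_comp ENNReal.ofReal).symm
      have h2 : volume (M ∩ K) = 0 := by
        rw [← Measure.restrict_apply hMm]; exact hM0
      rw [h2, mul_zero, add_zero, h1]
      exact hint.setLIntegral_lt_top
  choose g hgm hgle hgfin using key
  set Fs : Finset J := hfin.toFinset with hFsdef
  set G : ℝ → ℝ≥0∞ := fun x => ∑ j ∈ Fs, g j x with hGdef
  have hGm : Measurable G := Finset.measurable_sum _ fun j _ => hgm j
  -- pointwise bound on [0,T]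
  have hpt : ∀ s ∈ Set.Icc 0 T,
      ENNReal.ofReal ((c (S s ω) (ξ s ω)) ^ 2)
        ≤ G (S s ω) * ENNReal.ofReal ((σ (S s ω) (ξ s ω)) ^ 2) := by
    intro s hs
    set x := S s ω
    set j := ξ s ω
    have hxK : x ∈ K := Set.mem_image_of_mem _ hs
    have hxI : x ∈ Set.Ioo l r := hKsub hxK
    have hσ0 : σ x j ≠ 0 := hσ x hxI j
    have hjF : j ∈ Fs := by
      rw [hFsdef, Set.Finite.mem_toFinset]
      exact Set.mem_image_of_mem _ hs
    have hc : (c x j) ^ 2 = (c x j / σ x j) ^ 2 * (σ x j) ^ 2 := by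
      rw [div_pow, div_mul_cancel₀]
      exact pow_ne_zero 2 hσ0
    calc ENNReal.ofReal ((c x j) ^ 2)
        = ENNReal.ofReal ((c x j / σ x j) ^ 2) * ENNReal.ofReal ((σ x j) ^ 2) := by
          rw [hc, ENNReal.ofReal_mul (sq_nonneg _)]
      _ ≤ g j x * ENNReal.ofReal ((σ x j) ^ 2) :=
          mul_le_mul_left (hgle j x hxK) _
      _ ≤ G x * ENNReal.ofReal ((σ x j) ^ 2) :=
          mul_le_mul_left (Finset.single_le_sum (fun i _ => zero_le (a := g i x)) hjF) _
  calc ∫⁻ s in Set.Icc 0 T, ENNReal.ofReal ((c (S s ω) (ξ s ω)) ^ 2) ∂volume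
      ≤ ∫⁻ s in Set.Icc 0 T,
          G (S s ω) * ENNReal.ofReal ((σ (S s ω) (ξ s ω)) ^ 2) ∂volume := by
        refine lintegral_mono_ae ?_
        rw [ae_restrict_iff' measurableSet_Icc]
        exact ae_of_all _ hpt
    _ = ∫⁻ x, G x * (2 * L x ω) ∂volume := hocc' G hGm
    _ ≤ ∫⁻ x, G x * (2 * C) ∂volume :=
        lintegral_mono fun x => mul_le_mul_right (mul_le_mul_right (hCle x) 2) _
    _ = (∫⁻ x, G x ∂volume) * (2 * C) :=
        lintegral_mul_const' _ _ (ENNReal.mul_ne_top (by simp) hCne)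
    _ < ⊤ := by
        refine ENNReal.mul_lt_top ?_ (lt_top_iff_ne_top.2 (ENNReal.mul_ne_top (by simp) hCne))
        rw [hGdef]
        rw [lintegral_finset_sum _ fun j _ => hgm j]
        exact ENNReal.sum_lt_top.2 fun j _ => hgfin j
end
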